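/- In the group of invertible 3×3 real matrices, the element σx·σy has order exactly p, the element σy·σz has order exactly q, and the element σz·σx has order exactly 2. -/

import Mathlib

open Real

noncomputable def sigmaX (η : ℝ) : Matrix (Fin 3) (Fin 3) ℝ :=
  !![-1, 2*η, 0; 0, 1, 0; 0, 0, 1]

noncomputable def sigmaY (η ζ : ℝ) : Matrix (Fin 3) (Fin 3) ℝ :=
  !![1, 0, 0; 2*η, -1, 2*ζ; 0, 0, 1]

noncomputable def sigmaZ (ζ : ℝ) : Matrix (Fin 3) (Fin 3) ℝ :=
  !![1, 0, 0; 0, 1, 0; 0, 2*ζ, -1]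

noncomputable def rot3 (α : ℝ) : Matrix (Fin 3) (Fin 3) ℝ :=
  !![Real.cos α, Real.sin α, 0; -Real.sin α, Real.cos α, 0; 0, 0, 1]

lemma rot3_zero : rot3 0 = 1 := by
  simp [rot3, Matrix.one_fin_three]

lemma rot3_mul (α β : ℝ) : rot3 α * rot3 β = rot3 (α + β) := by
  ext i j
  fin_cases i <;> fin_cases j <;>
    simp [rot3, Matrix.mul_apply, Fin.sum_univ_three, Real.cos_add, Real.sin_add] <;> ring

lemma rot3_pow (α : ℝ) (k : ℕ) : (rot3 α) ^ k = rot3 (k * α) := by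
  induction k with
  | zero => simp [rot3_zero]
  | succ k ih =>
      rw [pow_succ, ih, rot3_mul]
      congr 1
      push_cast; ring

lemma rot3_eq_one_iff (β : ℝ) : rot3 β = 1 ↔ Real.cos β = 1 := by
  constructor
  · intro h
    have h00 := congr_fun (congr_fun h 0) 0
    simpa [rot3, Matrix.one_apply] using h00
  · intro h
    have hs2 : Real.sin β ^ 2 = 0 := by
      have := Real.sin_sq_add_cos_sq β; nlinarith
    have hs : Real.sin β = 0 := by
      exact pow_eq_zero_iff (by norm_num) |>.mp hs2
    ext i j
    fin_cases i <;> fin_cases j <;>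
      simp [rot3, h, hs, Matrix.one_apply, Matrix.vecHead, Matrix.vecTail]

lemma cos_nat_eq_one_iff (p k : ℕ) (hp : 0 < p) :
    Real.cos (2 * k * (π / p)) = 1 ↔ p ∣ k := by
  rw [Real.cos_eq_one_iff]
  constructor
  · rintro ⟨n, hn⟩
    have hπ : (π : ℝ) ≠ 0 := Real.pi_ne_zero
    have hp' : (p : ℝ) ≠ 0 := by positivity
    have hk : (n : ℝ) * p = k := by
      have h2 : (2 * π) ≠ 0 := by positivity
      apply mul_left_cancel₀ h2
      field_simp at hn
      linear_combination (2 * π) * hn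
    have hkz : (n : ℤ) * p = k := by exact_mod_cast hk
    exact Int.natCast_dvd_natCast.mp ⟨n, by rw [← hkz]; ring⟩
  · rintro ⟨m, rfl⟩
    refine ⟨m, ?_⟩
    have hp' : (p : ℝ) ≠ 0 := by positivity
    field_simp
    push_cast; ring

/-- Transport powers through a conjugation relation. -/
lemma pow_eq_one_iff_of_conj {X U R : Matrix (Fin 3) (Fin 3) ℝ}
    (hU : IsUnit U) (h : X * U = U * R) (k : ℕ) : X ^ k = 1 ↔ R ^ k = 1 := by
  have key : ∀ k : ℕ, X ^ k * U = U * R ^ k := by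
    intro k
    induction k with
    | zero => simp
    | succ k ih => rw [pow_succ', pow_succ', mul_assoc, ih, ← mul_assoc, h, mul_assoc]
  constructor
  · intro h1
    have := key k
    rw [h1, one_mul] at this
    have : U * R ^ k = U * 1 := by rw [mul_one]; exact this.symm
    exact hU.mul_left_cancel this
  · intro h1
    have := key k
    rw [h1, mul_one] at this
    have : X ^ k * U = 1 * U := by rw [one_mul]; exact this
    exact hU.mul_right_cancel this

lemma orderOf_of_pow_iff (p : ℕ) (hp : 2 ≤ p) (g : GL (Fin 3) ℝ)
    (h : ∀ k : ℕ, ((g ^ k : GL (Fin 3) ℝ) : Matrix (Fin 3) (Fin 3) ℝ) = 1 ↔ p ∣ k) :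
    orderOf g = p := by
  have key : ∀ k : ℕ, g ^ k = 1 ↔ p ∣ k := by
    intro k
    rw [← h k]
    constructor
    · intro hk; rw [hk]; simp
    · intro hk; exact Units.ext hk
  rw [orderOf_eq_iff (by omega)]
  refine ⟨(key p).mpr dvd_rfl, ?_⟩
  intro m hm hm0 hcon
  have := (key m).mp hcon
  have := Nat.le_of_dvd hm0 this
  omega

lemma sin_pi_div_ne_zero (p : ℕ) (hp : 2 ≤ p) : Real.sin (π / p) ≠ 0 := by
  have h1 : 0 < π / p := by positivity
  have h2 : π / p < π := by
    have h3 : π * 2 ≤ π * p :=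
      mul_le_mul_of_nonneg_left (by exact_mod_cast hp) Real.pi_pos.le
    rw [div_lt_iff₀ (by positivity)]
    linarith [Real.pi_pos]
  exact ne_of_gt (Real.sin_pos_of_pos_of_lt_pi h1 h2)

lemma order_of_M (p : ℕ) (hp : 2 ≤ p) (z : ℝ) (g : GL (Fin 3) ℝ)
    (hg : (g : Matrix (Fin 3) (Fin 3) ℝ) =
      !![4*(Real.cos (π/p))^2-1, -(2*Real.cos (π/p)), 4*Real.cos (π/p)*z;
         2*Real.cos (π/p), -1, 2*z; 0, 0, 1]) : orderOf g = p := by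
  set θ := π / p with hθ
  set c := Real.cos θ with hc
  set s := Real.sin θ with hsdef
  have hs : s ≠ 0 := sin_pi_div_ne_zero p hp
  set U : Matrix (Fin 3) (Fin 3) ℝ := !![c, s, c*z; 1, 0, z; 0, 0, s^2] with hUdef
  have hdet : U.det = -s^3 := by
    simp [hUdef, Matrix.det_fin_three]; ring
  have hU : IsUnit U := by
    rw [Matrix.isUnit_iff_isUnit_det, hdet, isUnit_iff_ne_zero]
    intro h0
    apply hs
    have : s ^ 3 = 0 := by linarith
    exact pow_eq_zero_iff (by norm_num) |>.mp this
  have hpyth : s ^ 2 + c ^ 2 = 1 := Real.sin_sq_add_cos_sq θ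
  have hconj : (g : Matrix (Fin 3) (Fin 3) ℝ) * U = U * rot3 (2 * θ) := by
    rw [hg]
    ext i j
    fin_cases i <;> fin_cases j <;>
      simp [hUdef, rot3, Matrix.mul_apply, Fin.sum_univ_three, Matrix.vecHead, Matrix.vecTail] <;>
      (try simp only [Real.cos_two_mul, Real.sin_two_mul, ← hc, ← hsdef]) <;>
      first
        | ring1
        | linear_combination (2*c) * hpyth
        | linear_combination (-(2*c)) * hpyth
        | linear_combination (4*c*z) * hpyth
        | linear_combination (-(4*c*z)) * hpyth
        | linear_combination (2*z) * hpyth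
        | linear_combination (-(2*z)) * hpyth
  apply orderOf_of_pow_iff p hp
  intro k
  rw [Units.val_pow_eq_pow_val]
  rw [pow_eq_one_iff_of_conj hU hconj, rot3_pow, rot3_eq_one_iff]
  rw [show (k : ℝ) * (2 * θ) = 2 * k * (π / p) from by rw [hθ]; ring]
  exact cos_nat_eq_one_iff p k (by omega)

lemma order_of_N (q : ℕ) (hq : 2 ≤ q) (e : ℝ) (g : GL (Fin 3) ℝ)
    (hg : (g : Matrix (Fin 3) (Fin 3) ℝ) =
      !![1, 0, 0; 2*e, 4*(Real.cos (π/q))^2-1, -(2*Real.cos (π/q));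
         0, 2*Real.cos (π/q), -1]) : orderOf g = q := by
  set θ := π / q with hθ
  set c := Real.cos θ with hc
  set s := Real.sin θ with hsdef
  have hs : s ≠ 0 := sin_pi_div_ne_zero q hq
  set U : Matrix (Fin 3) (Fin 3) ℝ := !![0, 0, s^2; c, s, e; 1, 0, e*c] with hUdef
  have hdet : U.det = -s^3 := by
    simp [hUdef, Matrix.det_fin_three]; ring
  have hU : IsUnit U := by
    rw [Matrix.isUnit_iff_isUnit_det, hdet, isUnit_iff_ne_zero]
    intro h0
    apply hs
    have : s ^ 3 = 0 := by linarith
    exact pow_eq_zero_iff (by norm_num) |>.mp this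
  have hpyth : s ^ 2 + c ^ 2 = 1 := Real.sin_sq_add_cos_sq θ
  have hconj : (g : Matrix (Fin 3) (Fin 3) ℝ) * U = U * rot3 (2 * θ) := by
    rw [hg]
    ext i j
    fin_cases i <;> fin_cases j <;>
      simp [hUdef, rot3, Matrix.mul_apply, Fin.sum_univ_three, Matrix.vecHead, Matrix.vecTail] <;>
      (try simp only [Real.cos_two_mul, Real.sin_two_mul, ← hc, ← hsdef]) <;>
      first
        | ring1
        | linear_combination (2*c) * hpyth
        | linear_combination (-(2*c)) * hpyth
        | linear_combination (2*e) * hpyth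
        | linear_combination (-(2*e)) * hpyth
  apply orderOf_of_pow_iff q hq
  intro k
  rw [Units.val_pow_eq_pow_val]
  rw [pow_eq_one_iff_of_conj hU hconj, rot3_pow, rot3_eq_one_iff]
  rw [show (k : ℝ) * (2 * θ) = 2 * k * (π / q) from by rw [hθ]; ring]
  exact cos_nat_eq_one_iff q k (by omega)

theorem triangle_group_generator_orders (p q : ℕ) (hp : 2 ≤ p) (hq : 2 ≤ q)
    (η ζ : ℝ) (hη : η = Real.cos (π / p)) (hζ : ζ = Real.cos (π / q))
    (gx gy gz : GL (Fin 3) ℝ)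
    (hgx : (gx : Matrix (Fin 3) (Fin 3) ℝ) = sigmaX η)
    (hgy : (gy : Matrix (Fin 3) (Fin 3) ℝ) = sigmaY η ζ)
    (hgz : (gz : Matrix (Fin 3) (Fin 3) ℝ) = sigmaZ ζ) :
    orderOf (gx * gy) = p ∧ orderOf (gy * gz) = q ∧ orderOf (gz * gx) = 2 := by
  have hxy : ((gx * gy : GL (Fin 3) ℝ) : Matrix (Fin 3) (Fin 3) ℝ) =
      !![4*(Real.cos (π/p))^2-1, -(2*Real.cos (π/p)), 4*Real.cos (π/p)*ζ;
         2*Real.cos (π/p), -1, 2*ζ; 0, 0, 1] := by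
    rw [Units.val_mul, hgx, hgy, sigmaX, sigmaY, Matrix.mul_fin_three, hη]
    norm_num; ring_nf; simp
  have hyz : ((gy * gz : GL (Fin 3) ℝ) : Matrix (Fin 3) (Fin 3) ℝ) =
      !![1, 0, 0; 2*η, 4*(Real.cos (π/q))^2-1, -(2*Real.cos (π/q));
         0, 2*Real.cos (π/q), -1] := by
    rw [Units.val_mul, hgy, hgz, sigmaY, sigmaZ, Matrix.mul_fin_three, hζ]
    norm_num; ring_nf
  have hzx : ((gz * gx : GL (Fin 3) ℝ) : Matrix (Fin 3) (Fin 3) ℝ) =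
      !![-1, 2*η, 0; 0, 1, 0; 0, 2*ζ, -1] := by
    rw [Units.val_mul, hgz, hgx, sigmaZ, sigmaX, Matrix.mul_fin_three]
    norm_num
  refine ⟨order_of_M p hp ζ _ hxy, order_of_N q hq η _ hyz, ?_⟩
  have h2 : (gz * gx) ^ 2 = 1 := by
    apply Units.ext
    rw [Units.val_pow_eq_pow_val, hzx, Units.val_one, pow_two, Matrix.mul_fin_three,
      Matrix.one_fin_three]
    norm_num
  have hne : gz * gx ≠ 1 := by
    intro h
    have hm : (!![-1, 2*η, 0; 0, 1, 0; 0, 2*ζ, -1] : Matrix (Fin 3) (Fin 3) ℝ) = 1 := by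
      rw [← hzx, h, Units.val_one]
    have h00 : (!![-1, 2*η, 0; 0, 1, 0; 0, 2*ζ, -1] : Matrix (Fin 3) (Fin 3) ℝ) 0 0
        = (1 : Matrix (Fin 3) (Fin 3) ℝ) 0 0 := by rw [hm]
    rw [Matrix.one_apply_eq] at h00
    norm_num at h00
  exact orderOf_eq_prime h2 hne
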